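/- With W = ⌈(3/(rε²))·ln(nc/β)⌉ for 0 < β < 1, 0 < r < 1, ε = 1-r, and nc links in the ring with c parallel links on each of n positions, the uniformly random ring-choice routing satisfies Pr[max_{e∈E} X_e > (1+ε)rW] ≤ |E|·β/(nc) = β < 1, where X_e is the number of packets routed through link e in a W-interval and (w,r)-admissibility of injections guarantees E[X_e] ≤ rW with X_e a sum of independent Bernoulli(1/c) indicators over at most crW packets. -/

import Mathlib

open MeasureTheory

lemma aux_exp_cubic {t : ℝ} (h0 : 0 ≤ t) (h1 : t ≤ 1) :
    Real.exp t ≤ 1 + t + t ^ 2 / 2 + 2 / 9 * t ^ 3 := by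
  have h := Real.exp_bound' h0 h1 (n := 3) (by norm_num)
  simp [Finset.sum_range_succ, Nat.factorial] at h
  nlinarith [h]

lemma aux_poly {ε : ℝ} (h0 : 0 < ε) (h1 : ε < 1) :
    ε ^ 2 / 3 ≤ ε * (4 * ε / 5) - (4 * ε / 5) ^ 2 / 2 - 2 / 9 * (4 * ε / 5) ^ 3 := by
  nlinarith [mul_nonneg (sq_nonneg ε) (by linarith : (0:ℝ) ≤ 1 - ε)]

lemma aux_sum_count {Pkt : Type*} [Fintype Pkt] [DecidableEq Pkt] {c : ℕ} [NeZero c]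
    (Q : Pkt → Prop) [DecidablePred Q] (j : Fin c) (y : ℝ) :
    ∑ ω : Pkt → Fin c, y ^ ((Finset.univ.filter (fun p => Q p ∧ ω p = j)).card) =
      (c - 1 + y) ^ (Finset.univ.filter Q).card *
        (c : ℝ) ^ (Fintype.card Pkt - (Finset.univ.filter Q).card) := by
  classical
  have hterm : ∀ ω : Pkt → Fin c,
      y ^ ((Finset.univ.filter (fun p => Q p ∧ ω p = j)).card) =
        ∏ p : Pkt, (if Q p ∧ ω p = j then y else 1) := by
    intro ω
    rw [← Finset.prod_const, Finset.prod_filter]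
  simp_rw [hterm]
  have hsum : ∑ ω : Pkt → Fin c, ∏ p : Pkt, (if Q p ∧ ω p = j then y else 1) =
      ∏ p : Pkt, ∑ x : Fin c, (if Q p ∧ x = j then y else 1) := by
    rw [Finset.prod_univ_sum (fun _ => Finset.univ) (fun p x => if Q p ∧ x = j then y else 1)]
    rw [Fintype.piFinset_univ]
  rw [hsum]
  have hinner : ∀ p : Pkt, (∑ x : Fin c, (if Q p ∧ x = j then y else 1)) =
      if Q p then ((c : ℝ) - 1 + y) else (c : ℝ) := by
    intro p
    by_cases hp : Q p
    · simp only [hp, true_and, if_true]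
      have h1 : ∀ x : Fin c, (if x = j then y else (1:ℝ)) = (if x = j then y - 1 else 0) + 1 := by
        intro x; split <;> ring
      simp_rw [h1, Finset.sum_add_distrib, Finset.sum_ite_eq' Finset.univ j (fun _ => y - 1)]
      simp
      ring
    · simp [hp]
  simp_rw [hinner]
  rw [Finset.prod_ite (fun _ => (c:ℝ) - 1 + y) (fun _ => (c:ℝ)), Finset.prod_const,
    Finset.prod_const]
  congr 1
  rw [Finset.filter_not, Finset.card_sdiff_of_subset (Finset.filter_subset _ _), Finset.card_univ]

set_option maxHeartbeats 1000000

/-- Randomized ring routing: on a ring with `n` positions and `c` parallel links at each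
position, each packet independently and uniformly chooses one of the `c` single rings.  With
`W = ⌈(3/(rε²))·ln(nc/β)⌉`, the probability that some link of the ring has more than
`(1+ε)rW` packets routed through it during a `W`-interval is at most `β < 1`. -/
theorem stmt_13 (n c : ℕ) (hn : 0 < n) (hc : 0 < c) [NeZero c]
    {Pkt : Type*} [Fintype Pkt] [DecidableEq Pkt]
    (crosses : Pkt → Finset (Fin n))   -- positions of the ring crossed by each packet
    (r ε β : ℝ) (hr0 : 0 < r) (hr1 : r < 1) (hε : ε = 1 - r) (hβ0 : 0 < β) (hβ1 : β < 1)
    (W : ℕ) (hW : W = ⌈3 / (r * ε ^ 2) * Real.log ((n : ℝ) * c / β)⌉₊)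
    -- (w,r)-admissibility: at most c·r·W packets of the W-interval cross any position
    (hadm : ∀ i : Fin n,
      ((Finset.univ.filter (fun p : Pkt => i ∈ crosses p)).card : ℝ) ≤ (c : ℝ) * (r * W))
    (X : Fin n × Fin c → (Pkt → Fin c) → ℕ)
    -- X e ω = number of packets routed through link e = (position, ring label) under choice ω
    (hX : ∀ (e : Fin n × Fin c) (ω : Pkt → Fin c),
      X e ω = (Finset.univ.filter (fun p : Pkt => e.1 ∈ crosses p ∧ ω p = e.2)).card) :
    (PMF.uniformOfFintype (Pkt → Fin c)).toMeasure
        {ω | ∃ e : Fin n × Fin c, (1 + ε) * r * W < (X e ω : ℝ)} ≤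
      ENNReal.ofReal β := by
  classical
  have hε0 : 0 < ε := by rw [hε]; linarith
  have hε1 : ε < 1 := by rw [hε]; linarith
  have ht0 : (0:ℝ) < 4 * ε / 5 := by linarith
  have ht1 : 4 * ε / 5 ≤ 1 := by linarith
  set y : ℝ := Real.exp (4 * ε / 5) with hy
  have hy1 : 1 < y := by
    have := Real.add_one_le_exp (4 * ε / 5)
    rw [hy]; linarith
  have hc1 : (1:ℝ) ≤ c := by exact_mod_cast hc
  have hn1 : (1:ℝ) ≤ n := by exact_mod_cast hn
  have hc0 : (0:ℝ) < c := by linarith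
  have hnc0 : (0:ℝ) < (n:ℝ) * c := by positivity
  have hW0 : (0:ℝ) ≤ (W:ℝ) := Nat.cast_nonneg W
  -- the Chernoff-exponent bound coming from the definition of W
  have hL : Real.log ((n:ℝ) * c / β) ≤ r * ε ^ 2 / 3 * W := by
    have hz : 3 / (r * ε ^ 2) * Real.log ((n : ℝ) * c / β) ≤ (W:ℝ) := by
      rw [hW]; exact Nat.le_ceil _
    have hre : (0:ℝ) < r * ε ^ 2 / 3 := by positivity
    calc Real.log ((n:ℝ) * c / β)
        = r * ε ^ 2 / 3 * (3 / (r * ε ^ 2) * Real.log ((n : ℝ) * c / β)) := by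
          field_simp
      _ ≤ r * ε ^ 2 / 3 * W := mul_le_mul_of_nonneg_left hz hre.le
  -- per-link Chernoff bound
  have key : ∀ e : Fin n × Fin c,
      (PMF.uniformOfFintype (Pkt → Fin c)).toMeasure
        {ω | (1 + ε) * r * W < (X e ω : ℝ)} ≤ ENNReal.ofReal (β / ((n:ℝ) * c)) := by
    intro e
    set a : ℝ := (1 + ε) * r * W with ha
    set m : ℕ := (Finset.univ.filter fun p : Pkt => e.1 ∈ crosses p).card with hmdef
    have hm : (m : ℝ) ≤ c * (r * W) := hadm e.1
    set N : ℕ := Fintype.card Pkt with hN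
    have hmN : m ≤ N := by
      rw [hmdef, hN, ← Finset.card_univ]
      exact Finset.card_filter_le _ _
    set F : Finset (Pkt → Fin c) := Finset.univ.filter (fun ω => a < (X e ω : ℝ)) with hF
    have hset : {ω : Pkt → Fin c | (1 + ε) * r * W < (X e ω : ℝ)} = ↑F := by
      ext ω; simp [hF, ha]
    rw [hset, PMF.toMeasure_apply_finset]
    simp only [PMF.uniformOfFintype_apply]
    rw [Finset.sum_const, nsmul_eq_mul]
    -- real counting bound
    have hcount : (F.card : ℝ) ≤ β / ((n:ℝ) * c) * (Fintype.card (Pkt → Fin c)) := by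
      have hchain1 : (F.card : ℝ) * Real.exp (4 * ε / 5 * a) ≤
          ∑ ω ∈ F, Real.exp (4 * ε / 5 * X e ω) := by
        calc (F.card : ℝ) * Real.exp (4 * ε / 5 * a)
            = ∑ _ω ∈ F, Real.exp (4 * ε / 5 * a) := by
              rw [Finset.sum_const, nsmul_eq_mul]
          _ ≤ ∑ ω ∈ F, Real.exp (4 * ε / 5 * X e ω) := by
              apply Finset.sum_le_sum
              intro ω hω
              have hωF : a < (X e ω : ℝ) := by
                have := (Finset.mem_filter.1 hω).2
                simpa using this
              exact Real.exp_le_exp.2 (mul_le_mul_of_nonneg_left hωF.le ht0.le)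
      have hchain2 : ∑ ω ∈ F, Real.exp (4 * ε / 5 * X e ω) ≤
          ∑ ω : Pkt → Fin c, Real.exp (4 * ε / 5 * X e ω) :=
        Finset.sum_le_sum_of_subset_of_nonneg (Finset.subset_univ F)
          (fun ω _ _ => (Real.exp_pos _).le)
      have hident : ∑ ω : Pkt → Fin c, Real.exp (4 * ε / 5 * X e ω) =
          ((c:ℝ) - 1 + y) ^ m * (c:ℝ) ^ (N - m) := by
        have hXpow : ∀ ω : Pkt → Fin c, Real.exp (4 * ε / 5 * X e ω) = y ^ (X e ω) := by
          intro ω; rw [hy, ← Real.exp_nat_mul, mul_comm]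
        simp_rw [hXpow, hX]
        exact aux_sum_count (fun p => e.1 ∈ crosses p) e.2 y
      have hfac : ((c:ℝ) - 1 + y) ^ m ≤ Real.exp (r * W * (y - 1)) * (c:ℝ) ^ m := by
        have h1 : (c:ℝ) - 1 + y = (c:ℝ) * (1 + (y - 1) / c) := by field_simp; ring
        have hyc : (0:ℝ) ≤ (y - 1) / c := div_nonneg (by linarith) hc0.le
        rw [h1, mul_pow, mul_comm]
        apply mul_le_mul_of_nonneg_right _ (pow_nonneg hc0.le m)
        calc (1 + (y - 1) / c) ^ m ≤ Real.exp ((y - 1) / c) ^ m := by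
              apply pow_le_pow_left₀ (by linarith)
              have := Real.add_one_le_exp ((y - 1) / c)
              linarith
          _ = Real.exp (m * ((y - 1) / c)) := by rw [← Real.exp_nat_mul]
          _ ≤ Real.exp (r * W * (y - 1)) := by
              apply Real.exp_le_exp.2
              have h2 := mul_le_mul_of_nonneg_right hm hyc
              calc (m:ℝ) * ((y - 1) / c) ≤ (c * (r * W)) * ((y - 1) / c) := h2
                _ = r * W * (y - 1) := by field_simp
      have hexp : Real.exp (r * W * (y - 1)) ≤ β / ((n:ℝ) * c) * Real.exp (4 * ε / 5 * a) := by
        have hβpos : 0 < β / ((n:ℝ) * c) := by positivity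
        rw [← Real.exp_log hβpos, ← Real.exp_add]
        apply Real.exp_le_exp.2
        have hlogeq : Real.log (β / ((n:ℝ) * c)) = - Real.log ((n:ℝ) * c / β) := by
          rw [← Real.log_inv]
          congr 1
          field_simp
        rw [hlogeq, ha]
        have hB : y - 1 ≤ 4 * ε / 5 + (4 * ε / 5) ^ 2 / 2 + 2 / 9 * (4 * ε / 5) ^ 3 := by
          have := aux_exp_cubic ht0.le ht1
          rw [hy]; linarith
        have hkey := aux_poly hε0 hε1
        have hq : (0:ℝ) ≤ r * W := by positivity
        have h3 := mul_le_mul_of_nonneg_left hB hq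
        have h4 := mul_le_mul_of_nonneg_left hkey hq
        nlinarith [h3, h4, hL]
      -- combine
      have hKcast : ((Fintype.card (Pkt → Fin c) : ℝ)) = (c:ℝ) ^ N := by
        rw [hN]
        simp [Fintype.card_fun]
      have hpow : (c:ℝ) ^ m * (c:ℝ) ^ (N - m) = (c:ℝ) ^ N := by
        rw [← pow_add]
        congr 1
        omega
      have hfinal : (F.card : ℝ) * Real.exp (4 * ε / 5 * a) ≤
          (β / ((n:ℝ) * c) * (c:ℝ) ^ N) * Real.exp (4 * ε / 5 * a) := by
        have h5 : ((c:ℝ) - 1 + y) ^ m * (c:ℝ) ^ (N - m) ≤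
            Real.exp (r * W * (y - 1)) * (c:ℝ) ^ N := by
          calc ((c:ℝ) - 1 + y) ^ m * (c:ℝ) ^ (N - m)
              ≤ (Real.exp (r * W * (y - 1)) * (c:ℝ) ^ m) * (c:ℝ) ^ (N - m) := by
                apply mul_le_mul_of_nonneg_right hfac (by positivity)
            _ = Real.exp (r * W * (y - 1)) * (c:ℝ) ^ N := by rw [mul_assoc, hpow]
        have h6 : Real.exp (r * W * (y - 1)) * (c:ℝ) ^ N ≤
            (β / ((n:ℝ) * c) * Real.exp (4 * ε / 5 * a)) * (c:ℝ) ^ N :=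
          mul_le_mul_of_nonneg_right hexp (by positivity)
        calc (F.card : ℝ) * Real.exp (4 * ε / 5 * a)
            ≤ ((c:ℝ) - 1 + y) ^ m * (c:ℝ) ^ (N - m) := by
              rw [← hident]; exact hchain1.trans hchain2
          _ ≤ (β / ((n:ℝ) * c) * Real.exp (4 * ε / 5 * a)) * (c:ℝ) ^ N := h5.trans h6
          _ = (β / ((n:ℝ) * c) * (c:ℝ) ^ N) * Real.exp (4 * ε / 5 * a) := by ring
      rw [hKcast]
      exact le_of_mul_le_mul_right hfinal (Real.exp_pos _)
    -- transfer to ENNReal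
    have hβnc : (0:ℝ) ≤ β / ((n:ℝ) * c) := by positivity
    have hKpos : 0 < Fintype.card (Pkt → Fin c) := Fintype.card_pos
    have hEN : (F.card : ENNReal) ≤
        ENNReal.ofReal (β / ((n:ℝ) * c)) * (Fintype.card (Pkt → Fin c) : ENNReal) := by
      rw [← ENNReal.ofReal_natCast F.card, ← ENNReal.ofReal_natCast,
        ← ENNReal.ofReal_mul hβnc]
      exact ENNReal.ofReal_le_ofReal hcount
    calc (F.card : ENNReal) * (Fintype.card (Pkt → Fin c) : ENNReal)⁻¹
        ≤ (ENNReal.ofReal (β / ((n:ℝ) * c)) * (Fintype.card (Pkt → Fin c) : ENNReal)) *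
            (Fintype.card (Pkt → Fin c) : ENNReal)⁻¹ := mul_le_mul_left hEN _
      _ = ENNReal.ofReal (β / ((n:ℝ) * c)) := by
          rw [mul_assoc, ENNReal.mul_inv_cancel (by exact_mod_cast hKpos.ne')
            (ENNReal.natCast_ne_top _), mul_one]
  -- union bound
  have hU : {ω : Pkt → Fin c | ∃ e : Fin n × Fin c, (1 + ε) * r * W < (X e ω : ℝ)} =
      ⋃ e : Fin n × Fin c, {ω | (1 + ε) * r * W < (X e ω : ℝ)} := by
    ext ω; simp [Set.mem_iUnion]
  rw [hU]
  calc (PMF.uniformOfFintype (Pkt → Fin c)).toMeasure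
        (⋃ e : Fin n × Fin c, {ω | (1 + ε) * r * W < (X e ω : ℝ)})
      ≤ ∑' e : Fin n × Fin c,
          (PMF.uniformOfFintype (Pkt → Fin c)).toMeasure
            {ω | (1 + ε) * r * W < (X e ω : ℝ)} := measure_iUnion_le _
    _ = ∑ e : Fin n × Fin c,
          (PMF.uniformOfFintype (Pkt → Fin c)).toMeasure
            {ω | (1 + ε) * r * W < (X e ω : ℝ)} := tsum_fintype _
    _ ≤ ∑ _e : Fin n × Fin c, ENNReal.ofReal (β / ((n:ℝ) * c)) :=
        Finset.sum_le_sum (fun e _ => key e)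
    _ = (Fintype.card (Fin n × Fin c) : ENNReal) * ENNReal.ofReal (β / ((n:ℝ) * c)) := by
        rw [Finset.sum_const, nsmul_eq_mul, Finset.card_univ]
    _ = ENNReal.ofReal β := by
        rw [← ENNReal.ofReal_natCast, ← ENNReal.ofReal_mul (by positivity)]
        congr 1
        rw [Fintype.card_prod, Fintype.card_fin, Fintype.card_fin]
        push_cast
        field_simp
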